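/- Let n ∈ ℕ, let θ be a skew-symmetric real n × n matrix, and set γ(p,q) := ⟨p, θq⟩ for p,q ∈ ℤⁿ. For ℏ ∈ ℝ define σ_ℏ(p,q) := exp(−πiℏ·γ(p,q)), and for finitely supported ψ, φ : ℤⁿ → ℂ define (ψ ⋆_ℏ φ)(p) := Σ_{p₁+p₂=p} ψ(p₁)·φ(p₂)·σ_ℏ(p₁,p₂). Then for every p ∈ ℤⁿ, the semiclassical limit holds: lim_{ℏ→0} ((ψ ⋆_ℏ φ)(p) − (ψ ⋆_0 φ)(p))/(iℏ) = −π·Σ_{p₁+p₂=p} γ(p₁,p₂)·ψ(p₁)·φ(p₂), where ⋆_0 is the ordinary (untwisted) convolution. -/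

import Mathlib

open Matrix

/-- The skew-symmetric biadditive form `γ(p,q) = ⟨p, θq⟩` on `ℤⁿ` determined by a real
matrix `θ`. -/
noncomputable def intSkewForm {n : ℕ} (θ : Matrix (Fin n) (Fin n) ℝ)
    (p q : Fin n → ℤ) : ℝ :=
  (fun i => (p i : ℝ)) ⬝ᵥ θ.mulVec (fun i => (q i : ℝ))

/-- Semiclassical limit for the twisted convolution on `ℤⁿ` (the Fourier picture of
Rieffel's strict deformation quantization of the `n`-torus): as `ℏ → 0`,
`((ψ ⋆_ℏ φ)(p) − (ψ ⋆_0 φ)(p))/(iℏ) → −π ∑_{p₁+p₂=p} γ(p₁,p₂) ψ(p₁) φ(p₂)`. -/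
theorem semiclassical_limit_twisted_convolution {n : ℕ}
    (θ : Matrix (Fin n) (Fin n) ℝ) (hskew : θᵀ = -θ)
    (ψ φ : (Fin n → ℤ) → ℂ)
    (hψ : (Function.support ψ).Finite) (hφ : (Function.support φ).Finite)
    (p : Fin n → ℤ) :
    Filter.Tendsto
      (fun ℏ : ℝ =>
        ((∑ᶠ q : Fin n → ℤ, ψ q * φ (p - q) *
            Complex.exp (-(Real.pi : ℂ) * Complex.I * (ℏ : ℂ) *
              ((intSkewForm θ q (p - q) : ℝ) : ℂ)))
          - ∑ᶠ q : Fin n → ℤ, ψ q * φ (p - q)) / (Complex.I * (ℏ : ℂ)))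
      (nhdsWithin 0 {0}ᶜ)
      (nhds (-(Real.pi : ℂ) *
        ∑ᶠ q : Fin n → ℤ, ((intSkewForm θ q (p - q) : ℝ) : ℂ) * ψ q * φ (p - q))) := by
  classical
  set S : Finset (Fin n → ℤ) := hψ.toFinset with hS
  have hmem : ∀ q : Fin n → ℤ, ψ q ≠ 0 → q ∈ S := by
    intro q hq; simp [hS, Set.Finite.mem_toFinset, Function.mem_support, hq]
  have key : ∀ g : (Fin n → ℤ) → ℂ,
      ∑ᶠ q : Fin n → ℤ, ψ q * g q = ∑ q ∈ S, ψ q * g q := by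
    intro g
    apply finsum_eq_finset_sum_of_support_subset
    intro q hq
    exact hmem q (left_ne_zero_of_mul hq)
  have h1 : ∀ ℏ : ℝ,
      (∑ᶠ q : Fin n → ℤ, ψ q * φ (p - q) *
        Complex.exp (-(Real.pi : ℂ) * Complex.I * (ℏ : ℂ) *
          ((intSkewForm θ q (p - q) : ℝ) : ℂ)))
      = ∑ q ∈ S, ψ q * (φ (p - q) *
        Complex.exp (-(Real.pi : ℂ) * Complex.I * (ℏ : ℂ) *
          ((intSkewForm θ q (p - q) : ℝ) : ℂ))) := by
    intro ℏ
    rw [← key]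
    exact finsum_congr fun q => by ring
  have h2 : (∑ᶠ q : Fin n → ℤ, ψ q * φ (p - q)) = ∑ q ∈ S, ψ q * φ (p - q) :=
    key _
  have h3 : (∑ᶠ q : Fin n → ℤ, ((intSkewForm θ q (p - q) : ℝ) : ℂ) * ψ q * φ (p - q))
      = ∑ q ∈ S, ((intSkewForm θ q (p - q) : ℝ) : ℂ) * ψ q * φ (p - q) := by
    calc ∑ᶠ q : Fin n → ℤ, ((intSkewForm θ q (p - q) : ℝ) : ℂ) * ψ q * φ (p - q)
        = ∑ᶠ q : Fin n → ℤ, ψ q * (((intSkewForm θ q (p - q) : ℝ) : ℂ) * φ (p - q)) :=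
          finsum_congr fun q => by ring
      _ = ∑ q ∈ S, ψ q * (((intSkewForm θ q (p - q) : ℝ) : ℂ) * φ (p - q)) := key _
      _ = ∑ q ∈ S, ((intSkewForm θ q (p - q) : ℝ) : ℂ) * ψ q * φ (p - q) :=
          Finset.sum_congr rfl fun q _ => by ring
  simp only [h1, h2, h3, Finset.mul_sum]
  simp only [← Finset.sum_sub_distrib, Finset.sum_div]
  apply tendsto_finset_sum
  intro q _
  set γ : ℂ := ((intSkewForm θ q (p - q) : ℝ) : ℂ) with hγ
  set a : ℂ := ψ q * φ (p - q) with ha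
  set c : ℂ := -(Real.pi : ℂ) * Complex.I * γ with hc
  have hd : HasDerivAt (fun x : ℝ => Complex.exp (c * (x : ℂ))) c 0 := by
    have h0 : HasDerivAt (fun x : ℝ => ((x : ℂ))) 1 0 := by
      simpa using (hasDerivAt_id (0 : ℝ)).ofReal_comp
    have h1 : HasDerivAt (fun x : ℝ => c * (x : ℂ)) c 0 := by
      simpa using h0.const_mul c
    simpa using h1.cexp
  have hslope := hasDerivAt_iff_tendsto_slope.mp hd
  have hmain : Filter.Tendsto
      (fun ℏ : ℝ => a / Complex.I * slope (fun x : ℝ => Complex.exp (c * (x : ℂ))) 0 ℏ)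
      (nhdsWithin 0 {0}ᶜ) (nhds (a / Complex.I * c)) :=
    hslope.const_mul _
  have heq : (fun ℏ : ℝ =>
      (ψ q * (φ (p - q) * Complex.exp (-(Real.pi : ℂ) * Complex.I * (ℏ : ℂ) * γ))
        - ψ q * φ (p - q)) / (Complex.I * (ℏ : ℂ)))
      = fun ℏ : ℝ => a / Complex.I * slope (fun x : ℝ => Complex.exp (c * (x : ℂ))) 0 ℏ := by
    funext ℏ
    have harg : -(Real.pi : ℂ) * Complex.I * (ℏ : ℂ) * γ = c * (ℏ : ℂ) := by rw [hc]; ring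
    rw [harg, slope_def_module]
    simp only [sub_zero, Complex.ofReal_zero, mul_zero, Complex.exp_zero, Complex.real_smul,
      Complex.ofReal_inv]
    rw [div_eq_mul_inv, mul_inv, ha]
    ring
  have hval : -(Real.pi : ℂ) * (γ * ψ q * φ (p - q)) = a / Complex.I * c := by
    rw [ha, hc, Complex.div_I]
    linear_combination (-(Real.pi : ℂ) * γ * ψ q * φ (p - q)) * Complex.I_mul_I
  rw [heq, hval]
  exact hmain
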